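/- Let L be a unimodular lattice and M a primitive sublattice of L with orthogonal complement M^⊥ in L. Then (M^⊥)* ⊥ M* = L + M*, and L + M* is the disjoint union of the cosets u + L as u + M ranges over M*/M. -/

import Mathlib

open scoped RealInnerProductSpace

/-- The dual lattice of a set `N` inside its rational span:
`N* = {v ∈ N ⊗ ℚ : ⟪v, u⟫ ∈ ℤ for all u ∈ N}`. -/
def dualLat {n : ℕ} (N : Set (EuclideanSpace ℝ (Fin n))) : Set (EuclideanSpace ℝ (Fin n)) :=
  {v | v ∈ Submodule.span ℚ N ∧ ∀ u ∈ N, ∃ k : ℤ, ⟪v, u⟫ = (k : ℝ)}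

lemma ratsmul {n : ℕ} (q : ℚ) (x : EuclideanSpace ℝ (Fin n)) : q • x = (q:ℝ) • x := by
  rw [← smul_one_smul ℝ q x, Rat.smul_def, mul_one]

lemma dual_add {n : ℕ} {S : Set (EuclideanSpace ℝ (Fin n))} {x y : EuclideanSpace ℝ (Fin n)}
    (hx : x ∈ dualLat S) (hy : y ∈ dualLat S) : x + y ∈ dualLat S := by
  refine ⟨Submodule.add_mem _ hx.1 hy.1, fun u hu => ?_⟩
  obtain ⟨k, hk⟩ := hx.2 u hu
  obtain ⟨l, hl⟩ := hy.2 u hu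
  exact ⟨k + l, by rw [inner_add_left, hk, hl]; push_cast; ring⟩

lemma dual_neg {n : ℕ} {S : Set (EuclideanSpace ℝ (Fin n))} {x : EuclideanSpace ℝ (Fin n)}
    (hx : x ∈ dualLat S) : -x ∈ dualLat S := by
  refine ⟨Submodule.neg_mem _ hx.1, fun u hu => ?_⟩
  obtain ⟨k, hk⟩ := hx.2 u hu
  exact ⟨-k, by rw [inner_neg_left, hk]; push_cast; ring⟩

lemma inner_zero_of_span {n : ℕ} {S : Set (EuclideanSpace ℝ (Fin n))}
    {w m : EuclideanSpace ℝ (Fin n)} (h : ∀ u ∈ S, ⟪u, w⟫ = 0)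
    (hm : m ∈ Submodule.span ℚ S) : ⟪m, w⟫ = 0 := by
  refine Submodule.span_induction h (by simp) ?_ ?_ hm
  · intro y z _ _ hy hz; rw [inner_add_left, hy, hz, add_zero]
  · intro q y _ hy; rw [ratsmul, real_inner_smul_left, hy, mul_zero]

lemma gram_solve {n : ℕ} {ι : Type} [Fintype ι] [DecidableEq ι]
    (v : ι → EuclideanSpace ℝ (Fin n))
    (hv : LinearIndependent ℚ v) (g : ι → ι → ℤ) (hg : ∀ i j, ⟪v i, v j⟫ = (g i j : ℝ))
    (t : ι → ℤ) : ∃ c : ι → ℚ, ∀ j, ∑ i, (c i : ℝ) * ⟪v i, v j⟫ = (t j : ℝ) := by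
  have gsymm : ∀ i j, g i j = g j i := by
    intro i j
    have := (hg i j).symm.trans ((real_inner_comm (v j) (v i)).trans (hg j i))
    exact_mod_cast this
  set G : Matrix ι ι ℚ := Matrix.of (fun i j => (g i j : ℚ)) with hG
  have hinj : Function.Injective G.mulVecLin := by
    rw [← LinearMap.ker_eq_bot, LinearMap.ker_eq_bot']
    intro c hc
    have hc' : ∀ j, ∑ i, c i * (g i j : ℚ) = 0 := by
      intro j
      have := congrFun hc j
      simpa [Matrix.mulVecLin_apply, Matrix.mulVec, dotProduct, hG, mul_comm,
        gsymm j] using this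
    have hw : ∑ i, c i • v i = 0 := by
      set w := ∑ i, c i • v i with hwdef
      have hwr : w = ∑ i, (c i : ℝ) • v i := by
        rw [hwdef]; exact Finset.sum_congr rfl fun i _ => ratsmul _ _
      have hwj : ∀ j, ⟪w, v j⟫ = 0 := by
        intro j
        rw [hwr, sum_inner]
        have : ∀ i ∈ Finset.univ, ⟪(c i : ℝ) • v i, v j⟫ = ((c i * g i j : ℚ) : ℝ) := by
          intro i _
          rw [real_inner_smul_left, hg]; push_cast; ring
        rw [Finset.sum_congr rfl this, ← Rat.cast_sum, hc' j, Rat.cast_zero]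
      have : ⟪w, w⟫ = 0 := by
        rw [hwr] at hwj ⊢
        rw [inner_sum]
        refine Finset.sum_eq_zero fun j _ => ?_
        rw [real_inner_smul_right, hwj j, mul_zero]
      have := inner_self_eq_zero.mp this
      rwa [hwdef] at this ⊢
    exact funext (Fintype.linearIndependent_iff.mp hv c hw)
  have hsurj := (LinearMap.injective_iff_surjective).mp hinj
  obtain ⟨c, hc⟩ := hsurj (fun j => (t j : ℚ))
  refine ⟨c, fun j => ?_⟩
  have hcj : ∑ i, c i * (g i j : ℚ) = (t j : ℚ) := by
    have := congrFun hc j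
    simpa [Matrix.mulVecLin_apply, Matrix.mulVec, dotProduct, hG, mul_comm,
      gsymm j] using this
  calc ∑ i, (c i : ℝ) * ⟪v i, v j⟫ = ((∑ i, c i * (g i j : ℚ) : ℚ) : ℝ) := by
        push_cast
        exact Finset.sum_congr rfl fun i _ => by rw [hg]
      _ = (t j : ℝ) := by rw [hcj]; norm_num


lemma key_decomp {n : ℕ} (L M : Submodule ℤ (EuclideanSpace ℝ (Fin n))) (hML : M ≤ L)
    (hint : ∀ v ∈ L, ∀ u ∈ L, ∃ k : ℤ, ⟪v, u⟫ = (k : ℝ)) (hMfg : M.FG) :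
    ∀ x ∈ L, ∃ m : EuclideanSpace ℝ (Fin n),
      m ∈ Submodule.span ℚ (M : Set (EuclideanSpace ℝ (Fin n))) ∧
      (∀ u ∈ M, ⟪x - m, u⟫ = 0) ∧ ∃ d : ℤ, d ≠ 0 ∧ d • m ∈ M := by
  classical
  obtain ⟨s, hs⟩ := hMfg
  have hsM : (s : Set (EuclideanSpace ℝ (Fin n))) ⊆ (M : Set (EuclideanSpace ℝ (Fin n))) := by
    rw [← hs]; exact Submodule.subset_span
  have hspan : Submodule.span ℚ (s : Set (EuclideanSpace ℝ (Fin n)))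
      = Submodule.span ℚ (M : Set (EuclideanSpace ℝ (Fin n))) := by
    rw [← hs, Submodule.span_span_of_tower]
  obtain ⟨b, hbs, hbspan, hbind⟩ := exists_linearIndependent ℚ (s : Set (EuclideanSpace ℝ (Fin n)))
  have hbfin : b.Finite := s.finite_toSet.subset hbs
  haveI := hbfin.fintype
  have hbM : ∀ i : b, (i : EuclideanSpace ℝ (Fin n)) ∈ M := fun i => hsM (hbs i.2)
  have hgex : ∀ i j : b, ∃ k : ℤ, ⟪(i : EuclideanSpace ℝ (Fin n)), (j : EuclideanSpace ℝ (Fin n))⟫ = (k:ℝ) :=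
    fun i j => hint _ (hML (hbM i)) _ (hML (hbM j))
  choose g hg using hgex
  intro x hx
  have htex : ∀ j : b, ∃ k : ℤ, ⟪x, (j : EuclideanSpace ℝ (Fin n))⟫ = (k:ℝ) :=
    fun j => hint x hx _ (hML (hbM j))
  choose t ht using htex
  obtain ⟨c, hc⟩ := gram_solve (Subtype.val : b → EuclideanSpace ℝ (Fin n)) hbind g hg t
  set m : EuclideanSpace ℝ (Fin n) := ∑ i : b, c i • (i : EuclideanSpace ℝ (Fin n)) with hm
  have hmspan : m ∈ Submodule.span ℚ (M : Set (EuclideanSpace ℝ (Fin n))) :=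
    Submodule.sum_mem _ fun i _ =>
      Submodule.smul_mem _ _ (Submodule.subset_span (hbM i))
  have hmj : ∀ j : b, ⟪m, (j : EuclideanSpace ℝ (Fin n))⟫ = (t j : ℝ) := by
    intro j
    rw [hm]
    rw [show (∑ i : b, c i • (i : EuclideanSpace ℝ (Fin n)))
        = ∑ i : b, (c i : ℝ) • (i : EuclideanSpace ℝ (Fin n)) from
      Finset.sum_congr rfl fun i _ => ratsmul _ _]
    rw [sum_inner]
    rw [show (∑ i : b, ⟪(c i : ℝ) • (i : EuclideanSpace ℝ (Fin n)), (j : EuclideanSpace ℝ (Fin n))⟫)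
        = ∑ i : b, (c i : ℝ) * ⟪(i : EuclideanSpace ℝ (Fin n)), (j : EuclideanSpace ℝ (Fin n))⟫ from
      Finset.sum_congr rfl fun i _ => real_inner_smul_left _ _ _]
    exact hc j
  have horth : ∀ u ∈ M, ⟪x - m, u⟫ = 0 := by
    intro u hu
    have hub : u ∈ Submodule.span ℚ b := by
      rw [hbspan, hspan]; exact Submodule.subset_span hu
    refine Submodule.span_induction ?_ ?_ ?_ ?_ hub
    · rintro y hy
      have : ⟪x - m, (⟨y, hy⟩ : b) ⟫ = 0 := by
        rw [inner_sub_left, ht, hmj, sub_self]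
      simpa using this
    · simp
    · intro y z _ _ hy hz
      rw [inner_add_right, hy, hz, add_zero]
    · intro q y _ hy
      rw [ratsmul, real_inner_smul_right, hy, mul_zero]
  obtain ⟨d, hd⟩ := IsLocalization.exist_integer_multiples_of_finite (nonZeroDivisors ℤ) c
  have hdne : (d : ℤ) ≠ 0 := nonZeroDivisors.coe_ne_zero d
  choose z hz using hd
  refine ⟨m, hmspan, horth, (d : ℤ), hdne, ?_⟩
  have : (d : ℤ) • m = ∑ i : b, z i • (i : EuclideanSpace ℝ (Fin n)) := by
    rw [hm, Finset.smul_sum]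
    refine Finset.sum_congr rfl fun i _ => ?_
    rw [← smul_assoc]
    have hzi : ((z i : ℚ)) = (d : ℤ) • c i := by
      simpa [IsLocalization.IsInteger, eq_comm] using hz i
    rw [← hzi, Int.cast_smul_eq_zsmul]
  rw [this]
  exact Submodule.sum_mem _ fun i _ => Submodule.smul_mem _ _ (hbM i)


set_option maxHeartbeats 2000000 in
/-- Let `L` be a unimodular lattice and `M` a primitive sublattice with orthogonal
complement `M^⊥` in `L`.  Then `(M^⊥)* ⊥ M* = L + M*`, and the cosets `u + L` for
`u ∈ M*` intersect exactly when `u − u' ∈ M` (so `L + M*` is the disjoint union of the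
cosets `u + L`, `u + M ∈ M*/M`). -/
theorem stmt_17 (n : ℕ) (L M : Submodule ℤ (EuclideanSpace ℝ (Fin n)))
    (hfull : Submodule.span ℝ (L : Set (EuclideanSpace ℝ (Fin n))) = ⊤)
    (hML : M ≤ L)
    (huni : ∀ v : EuclideanSpace ℝ (Fin n),
      v ∈ L ↔ ∀ u ∈ L, ∃ k : ℤ, ⟪v, u⟫ = (k : ℝ))
    (hprim : ∀ v ∈ L, v ∈ Submodule.span ℚ (M : Set (EuclideanSpace ℝ (Fin n))) →
      (∀ u ∈ M, ∃ k : ℤ, ⟪v, u⟫ = (k : ℝ)) → v ∈ M) :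
    ({x | ∃ a ∈ dualLat {v | v ∈ L ∧ ∀ u ∈ M, ⟪v, u⟫ = 0},
        ∃ b ∈ dualLat (M : Set (EuclideanSpace ℝ (Fin n))), x = a + b}
      = {x | ∃ a ∈ (L : Set (EuclideanSpace ℝ (Fin n))),
          ∃ b ∈ dualLat (M : Set (EuclideanSpace ℝ (Fin n))), x = a + b}) ∧
    (∀ u ∈ dualLat (M : Set (EuclideanSpace ℝ (Fin n))),
      ∀ u' ∈ dualLat (M : Set (EuclideanSpace ℝ (Fin n))),
        ((∃ a ∈ L, ∃ b ∈ L, u + a = u' + b) ↔ u - u' ∈ M)) := by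
  classical
  have hint : ∀ v ∈ L, ∀ u ∈ L, ∃ k : ℤ, ⟪v, u⟫ = (k : ℝ) := fun v hv => (huni v).mp hv
  haveI hdisc : DiscreteTopology L := by
    rw [discreteTopology_iff_isOpen_singleton_zero]
    have heq : ({0} : Set L) = (Subtype.val) ⁻¹' (Metric.ball (0 : EuclideanSpace ℝ (Fin n)) 1) := by
      ext ⟨v, hv⟩
      simp only [Set.mem_singleton_iff, Set.mem_preimage, Metric.mem_ball, dist_zero_right,
        Submodule.mk_eq_zero]
      constructor
      · rintro rfl; simpa using one_pos
      · intro hnorm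
        obtain ⟨k, hk⟩ := hint v hv v hv
        have hk2 : (k : ℝ) = ‖v‖ ^ 2 := by rw [← hk, real_inner_self_eq_norm_sq]
        have h1 : (k : ℝ) < 1 := by rw [hk2]; nlinarith [norm_nonneg v]
        have h0 : (0 : ℝ) ≤ (k : ℝ) := by rw [hk2]; positivity
        have hk0 : k = 0 := by
          have h1' : k < 1 := by exact_mod_cast h1
          have h0' : 0 ≤ k := by exact_mod_cast h0
          omega
        have : ‖v‖ ^ 2 = 0 := by rw [← hk2, hk0]; norm_num
        have : ‖v‖ = 0 := by nlinarith [norm_nonneg v]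
        exact norm_eq_zero.mp this
    rw [heq]
    exact IsOpen.preimage continuous_subtype_val Metric.isOpen_ball
  haveI : IsZLattice ℝ L := ⟨hfull⟩
  haveI : IsNoetherian ℤ L := isNoetherian_of_isNoetherianRing_of_finite ℤ L
  have hMfg : M.FG := by
    have h1 : (M.comap L.subtype).FG := IsNoetherian.noetherian _
    have h2 := Submodule.FG.map L.subtype h1
    rwa [Submodule.map_comap_subtype, inf_eq_right.mpr hML] at h2
  have key := key_decomp L M hML hint hMfg
  set Nset : Set (EuclideanSpace ℝ (Fin n)) :=
    {v | v ∈ L ∧ ∀ u ∈ M, ⟪v, u⟫ = 0} with hNset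
  constructor
  · ext x
    simp only [Set.mem_setOf_eq, SetLike.mem_coe]
    constructor
    · rintro ⟨a, ha, b, hb, rfl⟩
      -- the orthogonal complement as a submodule of ↥L
      set N2 : Submodule ℤ ↥L :=
        { carrier := {x : ↥L | ∀ u ∈ M, ⟪(x : EuclideanSpace ℝ (Fin n)), u⟫ = 0}
          add_mem' := fun {x y} hx hy u hu => by
            rw [Submodule.coe_add, inner_add_left, hx u hu, hy u hu, add_zero]
          zero_mem' := fun u hu => by simp
          smul_mem' := fun c {x} hx u hu => by
            rw [Submodule.coe_smul, ← Int.cast_smul_eq_zsmul ℝ, real_inner_smul_left,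
              hx u hu, mul_zero] } with hN2def
      have hN2mem : ∀ x : ↥L, x ∈ N2 ↔ ∀ u ∈ M, ⟪(x : EuclideanSpace ℝ (Fin n)), u⟫ = 0 :=
        fun _ => Iff.rfl
      haveI : NoZeroSMulDivisors ℤ (↥L ⧸ N2) := by
        refine ⟨fun {c x} h => ?_⟩
        rcases eq_or_ne c 0 with rfl | hc
        · exact Or.inl rfl
        · right
          obtain ⟨y, rfl⟩ := Submodule.Quotient.mk_surjective N2 x
          rw [← Submodule.Quotient.mk_smul, Submodule.Quotient.mk_eq_zero] at h
          rw [Submodule.Quotient.mk_eq_zero]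
          intro u hu
          have h' := (hN2mem _).mp h u hu
          rw [Submodule.coe_smul, ← Int.cast_smul_eq_zsmul ℝ, real_inner_smul_left] at h'
          have hcne : (c : ℝ) ≠ 0 := Int.cast_ne_zero.mpr hc
          exact (mul_eq_zero.mp h').resolve_left hcne
      haveI : Module.Finite ℤ (↥L ⧸ N2) := inferInstance
      haveI : Module.Free ℤ (↥L ⧸ N2) := Module.free_of_finite_type_torsion_free'
      haveI : Module.Projective ℤ (↥L ⧸ N2) := Module.Projective.of_free
      obtain ⟨σ, hσ⟩ := Module.projective_lifting_property N2.mkQ LinearMap.id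
        (Submodule.Quotient.mk_surjective N2)
      have hσ' : ∀ q, N2.mkQ (σ q) = q := fun q => by
        have := DFunLike.congr_fun hσ q
        simpa using this
      have hπmem : ∀ x : ↥L, x - σ (N2.mkQ x) ∈ N2 := by
        intro x
        have h0 : N2.mkQ (x - σ (N2.mkQ x)) = 0 := by rw [map_sub, hσ', sub_self]
        rwa [Submodule.mkQ_apply, Submodule.Quotient.mk_eq_zero] at h0
      -- the ℤ-linear functional on L extending ⟪a, ·⟫ on N
      set F : ↥L →ₗ[ℤ] ℝ :=
        { toFun := fun x => ⟪a, ((x - σ (N2.mkQ x) : ↥L) : EuclideanSpace ℝ (Fin n))⟫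
          map_add' := fun x y => by
            have : (x + y) - σ (N2.mkQ (x + y))
                = (x - σ (N2.mkQ x)) + (y - σ (N2.mkQ y)) := by
              rw [map_add, map_add]; abel
            rw [this, Submodule.coe_add, inner_add_right]
          map_smul' := fun c x => by
            have : (c • x) - σ (N2.mkQ (c • x)) = c • (x - σ (N2.mkQ x)) := by
              rw [map_smul, map_smul, smul_sub]
            rw [this, Submodule.coe_smul, ← Int.cast_smul_eq_zsmul ℝ, real_inner_smul_right]
            simp } with hFdef
      have hFint : ∀ x : ↥L, ∃ k : ℤ, F x = (k : ℝ) := by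
        intro x
        have hmem : ((x - σ (N2.mkQ x) : ↥L) : EuclideanSpace ℝ (Fin n)) ∈ Nset :=
          ⟨(x - σ (N2.mkQ x)).2, (hN2mem _).mp (hπmem x)⟩
        exact ha.2 _ hmem
      have hFN : ∀ x : ↥L, x ∈ N2 → F x = ⟪a, (x : EuclideanSpace ℝ (Fin n))⟫ := by
        intro x hx
        have h0 : N2.mkQ x = 0 := (Submodule.Quotient.mk_eq_zero _).mpr hx
        show ⟪a, ((x - σ (N2.mkQ x) : ↥L) : EuclideanSpace ℝ (Fin n))⟫ = _
        rw [h0, map_zero, sub_zero]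
      -- realize F by a vector v via a basis of L
      set b0 := Module.Free.chooseBasis ℤ ↥L with hb0
      set B := Module.Basis.ofZLatticeBasis ℝ L b0 with hB
      set φ : EuclideanSpace ℝ (Fin n) →ₗ[ℝ] ℝ := B.constr ℝ (fun i => F (b0 i)) with hφdef
      have hφ : ∀ x : ↥L, φ (x : EuclideanSpace ℝ (Fin n)) = F x := by
        have heq : (φ.restrictScalars ℤ).comp L.subtype = F := by
          refine Module.Basis.ext b0 fun i => ?_
          simp only [LinearMap.coe_comp, LinearMap.coe_restrictScalars, Function.comp_apply,
            Submodule.coe_subtype]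
          rw [show ((b0 i : ↥L) : EuclideanSpace ℝ (Fin n)) = B i from
            (Module.Basis.ofZLatticeBasis_apply ℝ L b0 i).symm, hφdef, Module.Basis.constr_basis]
        intro x
        exact DFunLike.congr_fun heq x
      set v : EuclideanSpace ℝ (Fin n) :=
        (InnerProductSpace.toDual ℝ (EuclideanSpace ℝ (Fin n))).symm
          (LinearMap.toContinuousLinearMap φ) with hvdef
      have hv : ∀ x : EuclideanSpace ℝ (Fin n), ⟪v, x⟫ = φ x := fun x =>
        InnerProductSpace.toDual_symm_apply
      have hvL : v ∈ L := by
        rw [huni]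
        intro u hu
        obtain ⟨k, hk⟩ := hFint ⟨u, hu⟩
        exact ⟨k, by rw [hv, hφ ⟨u, hu⟩, hk]⟩
      have hvN : ∀ w ∈ Nset, ⟪v, w⟫ = ⟪a, w⟫ := by
        intro w hw
        have : ⟪v, w⟫ = F ⟨w, hw.1⟩ := by rw [hv, hφ ⟨w, hw.1⟩]
        rw [this, hFN ⟨w, hw.1⟩ ((hN2mem _).mpr fun u hu => hw.2 u hu)]
      -- decompose v
      obtain ⟨m, hmspan, hmorth, d, hd0, hdm⟩ := key v hvL
      have hmdual : m ∈ dualLat (M : Set (EuclideanSpace ℝ (Fin n))) := by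
        refine ⟨hmspan, fun u hu => ?_⟩
        obtain ⟨k, hk⟩ := hint v hvL u (hML hu)
        refine ⟨k, ?_⟩
        have := hmorth u hu
        rw [inner_sub_left] at this
        linarith [hk]
      -- span of M ∪ N is everything
      have hspan_top : Submodule.span ℝ ((M : Set (EuclideanSpace ℝ (Fin n))) ∪ Nset) = ⊤ := by
        rw [eq_top_iff, ← hfull]
        refine Submodule.span_le.mpr fun x hx => ?_
        obtain ⟨m', hm'span, hm'orth, d', hd'0, hd'm⟩ := key x hx
        have h1 : m' ∈ Submodule.span ℝ ((M : Set (EuclideanSpace ℝ (Fin n))) ∪ Nset) := by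
          refine Submodule.span_mono Set.subset_union_left ?_
          exact Submodule.span_subset_span ℚ ℝ _ hm'span
        have hdN : d' • (x - m') ∈ Nset := by
          refine ⟨?_, fun u hu => ?_⟩
          · rw [smul_sub]
            exact L.sub_mem (L.smul_mem d' hx) (hML hd'm)
          · rw [← Int.cast_smul_eq_zsmul ℝ, real_inner_smul_left, hm'orth u hu, mul_zero]
        have h2 : x - m' ∈ Submodule.span ℝ ((M : Set (EuclideanSpace ℝ (Fin n))) ∪ Nset) := by
          have hrepr : x - m' = ((d' : ℝ)⁻¹) • ((d' : ℝ) • (x - m')) := by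
            rw [smul_smul, inv_mul_cancel₀ (by exact_mod_cast hd'0), one_smul]
          rw [hrepr, Int.cast_smul_eq_zsmul ℝ]
          exact Submodule.smul_mem _ _
            (Submodule.subset_span (Set.mem_union_right _ hdN))
        have := Submodule.add_mem _ h1 h2
        rwa [add_sub_cancel] at this
      -- a = v - m
      have hzM : ∀ u ∈ M, ⟪a - (v - m), u⟫ = 0 := by
        intro u hu
        have h1 : ⟪a, u⟫ = 0 :=
          inner_zero_of_span (fun w hw => hw.2 u hu) ha.1
        rw [inner_sub_left, h1, hmorth u hu, sub_zero]
      have hzN : ∀ w ∈ Nset, ⟪a - (v - m), w⟫ = 0 := by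
        intro w hw
        have h1 : ⟪m, w⟫ = 0 :=
          inner_zero_of_span (fun u hu => by rw [real_inner_comm]; exact hw.2 u hu) hmspan
        rw [inner_sub_left, inner_sub_left, hvN w hw, h1]
        ring
      have hz0 : a - (v - m) = 0 := by
        have hmem : a - (v - m) ∈
            (Submodule.span ℝ ((M : Set (EuclideanSpace ℝ (Fin n))) ∪ Nset))ᗮ := by
          rw [Submodule.mem_orthogonal]
          intro y hy
          refine Submodule.span_induction ?_ (by simp) ?_ ?_ hy
          · rintro y (hyM | hyN)
            · rw [real_inner_comm]; exact hzM y hyM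
            · rw [real_inner_comm]; exact hzN y hyN
          · intro y z _ _ hy hz; rw [inner_add_left, hy, hz, add_zero]
          · intro r y _ hy; rw [real_inner_smul_left, hy, mul_zero]
        rw [hspan_top, Submodule.top_orthogonal_eq_bot] at hmem
        exact (Submodule.mem_bot ℝ).mp hmem
      have ha_eq : a = v - m := sub_eq_zero.mp hz0
      refine ⟨v, hvL, b + -m, dual_add hb (dual_neg hmdual), ?_⟩
      rw [ha_eq]; abel
    · rintro ⟨a, ha, b, hb, rfl⟩
      obtain ⟨m, hmspan, hmorth, d, hd0, hdm⟩ := key a ha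
      have hmdual : m ∈ dualLat (M : Set (EuclideanSpace ℝ (Fin n))) := by
        refine ⟨hmspan, fun u hu => ?_⟩
        obtain ⟨k, hk⟩ := hint a ha u (hML hu)
        refine ⟨k, ?_⟩
        have := hmorth u hu
        rw [inner_sub_left] at this
        linarith [hk]
      have hdN : d • (a - m) ∈ Nset := by
        refine ⟨?_, fun u hu => ?_⟩
        · have : d • (a - m) = d • a - d • m := smul_sub d a m
          rw [this]
          exact L.sub_mem (L.smul_mem d ha) (hML hdm)
        · have : ⟪d • (a - m), u⟫ = (d : ℝ) * ⟪a - m, u⟫ := by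
            rw [← Int.cast_smul_eq_zsmul ℝ d (a - m), real_inner_smul_left]
          rw [this, hmorth u hu, mul_zero]
      refine ⟨a - m, ⟨?_, fun w hw => ?_⟩, m + b, dual_add hmdual hb, by abel⟩
      · have hrepr : a - m = ((d : ℚ)⁻¹) • (d • (a - m)) := by
          rw [← Int.cast_smul_eq_zsmul ℚ d (a - m), smul_smul,
            inv_mul_cancel₀ (by exact_mod_cast hd0), one_smul]
        rw [hrepr]
        exact Submodule.smul_mem _ _ (Submodule.subset_span hdN)
      · obtain ⟨k, hk⟩ := hint a ha w hw.1
        refine ⟨k, ?_⟩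
        have hmw : ⟪m, w⟫ = 0 := by
          refine inner_zero_of_span (fun u hu => ?_) hmspan
          rw [real_inner_comm]
          exact hw.2 u hu
        rw [inner_sub_left, hmw, hk, sub_zero]
  · intro u hu u' hu'
    constructor
    · rintro ⟨a, ha, b, hb, heq⟩
      have hsub : u - u' = b - a := by
        rw [sub_eq_sub_iff_add_eq_add, heq, add_comm]
      refine hprim (u - u') ?_ (Submodule.sub_mem _ hu.1 hu'.1) fun w hw => ?_
      · rw [hsub]; exact L.sub_mem hb ha
      · obtain ⟨k1, hk1⟩ := hu.2 w hw
        obtain ⟨k2, hk2⟩ := hu'.2 w hw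
        exact ⟨k1 - k2, by rw [inner_sub_left, hk1, hk2]; push_cast; ring⟩
    · intro hM
      exact ⟨0, L.zero_mem, u - u', hML hM, by abel⟩
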